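/- Let F be a finite field with |F| = q ≥ 2 and let p ∈ [0,1] be a real number. Consider the weighted sum over all pairs (k, ε) with k = (a,b,c,d,k13,k14,k25,k26,k47,k57,k78,k79) ∈ F^12 and ε = (ε1,…,ε9) ∈ Bool^9, where each pair has weight q^{-12} · ∏_{i=1}^{9} w(ε_i) with w(true) = 1−p and w(false) = p. Then the total weight of pairs for which both erased decoding matrices F̃_{t1} = (f̃3 f̃8) and F̃_{t2} = (f̃6 f̃9) are invertible (where f̃1 = (a,b) if ε1 else 0, f̃2 = (c,d) if ε2 else 0, f̃3 = k13·f̃1 if ε3 else 0, f̃4 = k14·f̃1 if ε4 else 0, f̃5 = k25·f̃2 if ε5 else 0, f̃6 = k26·f̃2 if ε6 else 0, f̃7 = k47·f̃4 + k57·f̃5 if ε7 else 0, f̃8 = k78·f̃7 if ε8 else 0, f̃9 = k79·f̃7 if ε9 else 0) equals (q+1)(q-1)^10(1−p)^9/q^11. Hence the failure probability of the butterfly network with channel failure probability p is P̃_e = 1 − (q+1)(q-1)^10(1−p)^9/q^11. -/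

import Mathlib

/- Active global encoding kernels of the butterfly network with channel erasures:
`fᵢt` is the usual linear-combination value when the Boolean `eᵢ` (channel `eᵢ`
successful) is true, and the zero vector otherwise. The source kernel is
`K_s = [[a,c],[b,d]]`, i.e. `f1 = (a,b)ᵀ`, `f2 = (c,d)ᵀ`. -/

def f1t {F : Type*} [Field F] (a b : F) (e1 : Bool) : Fin 2 → F :=
  if e1 then ![a, b] else 0

def f2t {F : Type*} [Field F] (c d : F) (e2 : Bool) : Fin 2 → F :=
  if e2 then ![c, d] else 0

def f3t {F : Type*} [Field F] (a b k13 : F) (e1 e3 : Bool) : Fin 2 → F :=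
  if e3 then k13 • f1t a b e1 else 0

def f4t {F : Type*} [Field F] (a b k14 : F) (e1 e4 : Bool) : Fin 2 → F :=
  if e4 then k14 • f1t a b e1 else 0

def f5t {F : Type*} [Field F] (c d k25 : F) (e2 e5 : Bool) : Fin 2 → F :=
  if e5 then k25 • f2t c d e2 else 0

def f6t {F : Type*} [Field F] (c d k26 : F) (e2 e6 : Bool) : Fin 2 → F :=
  if e6 then k26 • f2t c d e2 else 0

def f7t {F : Type*} [Field F] (a b c d k14 k47 k25 k57 : F) (e1 e2 e4 e5 e7 : Bool) :
    Fin 2 → F :=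
  if e7 then k47 • f4t a b k14 e1 e4 + k57 • f5t c d k25 e2 e5 else 0

def f8t {F : Type*} [Field F] (a b c d k14 k47 k78 k25 k57 : F) (e1 e2 e4 e5 e7 e8 : Bool) :
    Fin 2 → F :=
  if e8 then k78 • f7t a b c d k14 k47 k25 k57 e1 e2 e4 e5 e7 else 0

def f9t {F : Type*} [Field F] (a b c d k14 k47 k79 k25 k57 : F) (e1 e2 e4 e5 e7 e9 : Bool) :
    Fin 2 → F :=
  if e9 then k79 • f7t a b c d k14 k47 k25 k57 e1 e2 e4 e5 e7 else 0

/- The erased decoding matrix at sink `t₁`: columns `f̃3` and `f̃8`. -/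
def Ft1t {F : Type*} [Field F] (a b c d k13 k14 k47 k78 k25 k57 : F)
    (e1 e2 e3 e4 e5 e7 e8 : Bool) : Matrix (Fin 2) (Fin 2) F :=
  !![f3t a b k13 e1 e3 0, f8t a b c d k14 k47 k78 k25 k57 e1 e2 e4 e5 e7 e8 0;
     f3t a b k13 e1 e3 1, f8t a b c d k14 k47 k78 k25 k57 e1 e2 e4 e5 e7 e8 1]

/- The erased decoding matrix at sink `t₂`: columns `f̃6` and `f̃9`. -/
def Ft2t {F : Type*} [Field F] (a b c d k14 k47 k79 k25 k57 k26 : F)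
    (e1 e2 e4 e5 e6 e7 e9 : Bool) : Matrix (Fin 2) (Fin 2) F :=
  !![f6t c d k26 e2 e6 0, f9t a b c d k14 k47 k79 k25 k57 e1 e2 e4 e5 e7 e9 0;
     f6t c d k26 e2 e6 1, f9t a b c d k14 k47 k79 k25 k57 e1 e2 e4 e5 e7 e9 1]

/- STATEMENT 9: with `q = |F| ≥ 2` and channel failure probability `p ∈ [0,1]`,
summing over coefficient tuples `k = (a,b,c,d,k13,k14,k25,k26,k47,k57,k78,k79) ∈ F^12`
(encoded as `v 0, …, v 11`) and success indicators `ε = (ε1,…,ε9) ∈ Bool^9`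
(encoded as `e 0, …, e 8`), each pair weighted by `q⁻¹² · ∏ᵢ w(εᵢ)` with
`w(true) = 1-p`, `w(false) = p`, the total weight of pairs making both erased decoding
matrices `F̃_{t1} = (f̃3 f̃8)` and `F̃_{t2} = (f̃6 f̃9)` invertible is
`(q+1)(q-1)^10(1-p)^9/q^11`; hence `P̃_e = 1 - (q+1)(q-1)^10(1-p)^9/q^11`. -/

open Finset

open Finset

section Aux

lemma sum_ite_eq_gen {α : Type*} [Fintype α] (x0 : α) (f : α → ℝ)
    [inst : ∀ x : α, Decidable (x = x0)] :
    ∑ x : α, (if x = x0 then f x else 0) = f x0 := by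
  rw [Finset.sum_eq_single x0]
  · rw [if_pos rfl]
  · intro b _ hb; rw [if_neg hb]
  · intro h; exact absurd (Finset.mem_univ x0) h

variable {F : Type*} [Field F] [Fintype F]

lemma sum_ite_ne (x0 : F) (s : ℝ) [inst : ∀ x : F, Decidable (x ≠ x0)] :
    ∑ x : F, (if x ≠ x0 then s else 0) = ((Fintype.card F : ℝ) - 1) * s := by
  classical
  have h : ∀ x : F, (if x ≠ x0 then s else 0) = s - (if x = x0 then s else 0) := by
    intro x; by_cases hx : x = x0
    · rw [if_pos hx, if_neg (not_not_intro hx), sub_self]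
    · rw [if_pos hx, if_neg hx, sub_zero]
  rw [Finset.sum_congr rfl fun x _ => h x, Finset.sum_sub_distrib, sum_ite_eq_gen,
    Finset.sum_const, Finset.card_univ, nsmul_eq_mul]
  ring

lemma sum_ite_ne_and (P : Prop) (r : ℝ) [instP : Decidable P]
    [inst : ∀ x : F, Decidable (x ≠ 0 ∧ P)] :
    ∑ x : F, (if x ≠ 0 ∧ P then r else 0) =
      ((Fintype.card F : ℝ) - 1) * (if P then r else 0) := by
  classical
  by_cases hP : P
  · have h : ∀ x : F, (if x ≠ 0 ∧ P then r else 0) = (if x ≠ (0:F) then r else 0) := by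
      intro x; by_cases hx : x ≠ (0:F)
      · rw [if_pos ⟨hx, hP⟩, if_pos hx]
      · rw [if_neg (fun hc => hx hc.1), if_neg hx]
    rw [Finset.sum_congr rfl fun x _ => h x, sum_ite_ne 0 r, if_pos hP]
  · rw [if_neg hP, mul_zero]
    exact Finset.sum_eq_zero fun x _ => if_neg (fun hc => hP hc.2)

lemma sum_det4 (s : ℝ) [inst : ∀ a b c d : F, Decidable (a * d - c * b ≠ 0)] :
    ∑ a : F, ∑ b : F, ∑ c : F, ∑ d : F, (if a * d - c * b ≠ 0 then s else 0) =
      (Fintype.card F : ℝ) * ((Fintype.card F : ℝ) + 1) * ((Fintype.card F : ℝ) - 1)^2 * s := by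
  classical
  set Q : ℝ := (Fintype.card F : ℝ) with hQ
  have hd : ∀ a u : F, a ≠ 0 → (∀ (i : ∀ d : F, Decidable (a * d - u ≠ 0)),
      ∑ d : F, (if a * d - u ≠ 0 then s else 0) = (Q - 1) * s) := by
    intro a u ha i
    have hiff : ∀ d : F, (a * d - u ≠ 0) ↔ (d ≠ a⁻¹ * u) := by
      intro d
      rw [Ne, Ne, sub_eq_zero]
      exact not_congr (eq_inv_mul_iff_mul_eq₀ ha).symm
    have h : ∀ d : F, (if a * d - u ≠ 0 then s else 0) = (if d ≠ a⁻¹ * u then s else 0) := by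
      intro d; by_cases hh : d ≠ a⁻¹ * u
      · rw [if_pos ((hiff d).mpr hh), if_pos hh]
      · rw [if_neg (fun h2 => hh ((hiff d).mp h2)), if_neg hh]
    rw [Finset.sum_congr rfl fun d _ => h d, sum_ite_ne _ s]
  have hcard : ∑ _x : F, s = Q * s := by
    rw [Finset.sum_const, Finset.card_univ]; simp [hQ, nsmul_eq_mul]
  rw [← Finset.sum_erase_add _ _ (Finset.mem_univ (0:F))]
  have h2 : ∀ a : F, a ≠ 0 →
      (∑ b : F, ∑ c : F, ∑ d : F, (if a * d - c * b ≠ 0 then s else 0)) = Q * (Q * ((Q-1)*s)) := by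
    intro a ha
    calc ∑ b : F, ∑ c : F, ∑ d : F, (if a * d - c * b ≠ 0 then s else 0)
        = ∑ _b : F, ∑ _c : F, (Q-1)*s :=
          Finset.sum_congr rfl fun b _ => Finset.sum_congr rfl fun c _ => hd a (c*b) ha _
      _ = Q * (Q * ((Q-1)*s)) := by
          rw [Finset.sum_const, Finset.sum_const, Finset.card_univ]
          simp only [nsmul_eq_mul, ← hQ]
  have h3 : (∑ b : F, ∑ c : F, ∑ d : F, (if (0:F) * d - c * b ≠ 0 then s else 0))
      = (Q-1) * ((Q-1) * (Q * s)) := by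
    calc (∑ b : F, ∑ c : F, ∑ d : F, (if (0:F) * d - c * b ≠ 0 then s else 0))
        = ∑ b : F, ∑ c : F, (if c ≠ 0 ∧ b ≠ 0 then Q * s else 0) := by
          refine Finset.sum_congr rfl fun b _ => Finset.sum_congr rfl fun c _ => ?_
          by_cases h : c ≠ 0 ∧ b ≠ 0
          · rw [if_pos h, ← hcard]
            refine Finset.sum_congr rfl fun d _ => ?_
            rw [if_pos]
            simp only [zero_mul, zero_sub, neg_ne_zero]
            exact mul_ne_zero h.1 h.2
          · rw [if_neg h]
            refine Finset.sum_eq_zero fun d _ => ?_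
            rw [if_neg]
            refine not_not_intro ?_
            rw [zero_mul, zero_sub, neg_eq_zero]
            rcases not_and_or.mp h with h' | h'
            · rw [not_not.mp h', zero_mul]
            · rw [not_not.mp h', mul_zero]
      _ = ∑ b : F, (Q-1) * (if b ≠ 0 then Q * s else 0) :=
          Finset.sum_congr rfl fun b _ => sum_ite_ne_and _ _
      _ = (Q-1) * ((Q-1) * (Q * s)) := by
          rw [← Finset.mul_sum, sum_ite_ne 0 (Q*s)]
  rw [Finset.sum_congr rfl (fun a ha => h2 a (Finset.mem_erase.mp ha).1), h3,
    Finset.sum_const, Finset.card_erase_of_mem (Finset.mem_univ _), Finset.card_univ]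
  have h1 : (1:ℕ) ≤ Fintype.card F := Fintype.card_pos
  simp only [nsmul_eq_mul, Nat.cast_sub h1, Nat.cast_one, ← hQ]
  ring

lemma sum_pi_succ {n : ℕ} (g : (Fin (n+1) → F) → ℝ) :
    ∑ v : Fin (n+1) → F, g v = ∑ x : F, ∑ w : Fin n → F, g (Fin.cons x w) := by
  rw [← (Fin.consEquiv (fun _ : Fin (n+1) => F)).sum_comp g, Fintype.sum_prod_type]
  rfl

lemma sum_pi_zero (g : (Fin 0 → F) → ℝ) :
    ∑ w : Fin 0 → F, g w = g Fin.elim0 := by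
  have h : ∀ w : Fin 0 → F, w = Fin.elim0 := fun w => funext fun i => i.elim0
  calc ∑ w : Fin 0 → F, g w = ∑ _w : Fin 0 → F, g Fin.elim0 :=
        Finset.sum_congr rfl fun w _ => by rw [h w]
    _ = g Fin.elim0 := by
        rw [Finset.sum_const, Finset.card_univ]
        simp

omit [Field F] in
lemma sum_pi_init {n : ℕ} (g : (Fin (n+1) → F) → ℝ) :
    ∑ v : Fin (n+1) → F, g v = ∑ w : Fin n → F, ∑ x : F, g (Fin.snoc w x) := by
  rw [← (Fin.snocEquiv (fun _ : Fin (n+1) => F)).sum_comp g, Fintype.sum_prod_type]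
  rw [Finset.sum_comm]
  rfl

lemma sum_ite_ne_and' (P : Prop) (r : ℝ) [instP : Decidable P]
    [inst : ∀ x : F, Decidable (x ≠ 0 ∧ P)] :
    ∑ x : F, (if x ≠ 0 ∧ P then r else 0) =
      (if P then ((Fintype.card F : ℝ) - 1) * r else 0) := by
  rw [sum_ite_ne_and]
  by_cases hP : P
  · rw [if_pos hP, if_pos hP]
  · rw [if_neg hP, if_neg hP, mul_zero]

open Classical in
lemma sum_det4' (s : ℝ) :
    ∑ y : Fin 4 → F, (if y 0 * y 3 - y 2 * y 1 ≠ 0 then s else 0) =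
      (Fintype.card F : ℝ) * ((Fintype.card F : ℝ) + 1) * ((Fintype.card F : ℝ) - 1)^2 * s := by
  calc ∑ y : Fin 4 → F, (if y 0 * y 3 - y 2 * y 1 ≠ 0 then s else 0)
      = ∑ y : Fin 3 → F, ∑ d : F, (if y 0 * d - y 2 * y 1 ≠ 0 then s else 0) := by
        rw [sum_pi_init]; rfl
    _ = ∑ y : Fin 2 → F, ∑ c : F, ∑ d : F, (if y 0 * d - c * y 1 ≠ 0 then s else 0) := by
        rw [sum_pi_init]; rfl
    _ = ∑ y : Fin 1 → F, ∑ b : F, ∑ c : F, ∑ d : F, (if y 0 * d - c * b ≠ 0 then s else 0) := by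
        rw [sum_pi_init]; rfl
    _ = ∑ y : Fin 0 → F, ∑ a : F, ∑ b : F, ∑ c : F, ∑ d : F, (if a * d - c * b ≠ 0 then s else 0) := by
        rw [sum_pi_init]; rfl
    _ = ∑ a : F, ∑ b : F, ∑ c : F, ∑ d : F, (if a * d - c * b ≠ 0 then s else 0) := by
        rw [sum_pi_zero]
    _ = (Fintype.card F : ℝ) * ((Fintype.card F : ℝ) + 1) * ((Fintype.card F : ℝ) - 1)^2 * s := sum_det4 s

open Classical in
lemma count12 (r : ℝ) :
    ∑ v : Fin 12 → F, (if (v 11 ≠ 0 ∧ v 10 ≠ 0 ∧ v 9 ≠ 0 ∧ v 8 ≠ 0 ∧ v 7 ≠ 0 ∧ v 6 ≠ 0 ∧ v 5 ≠ 0 ∧ v 4 ≠ 0 ∧ v 0 * v 3 - v 2 * v 1 ≠ 0) then r else 0) =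
      (Fintype.card F : ℝ) * ((Fintype.card F : ℝ) + 1) * ((Fintype.card F : ℝ) - 1)^10 * r := by
  calc ∑ v : Fin 12 → F, (if (v 11 ≠ 0 ∧ v 10 ≠ 0 ∧ v 9 ≠ 0 ∧ v 8 ≠ 0 ∧ v 7 ≠ 0 ∧ v 6 ≠ 0 ∧ v 5 ≠ 0 ∧ v 4 ≠ 0 ∧ v 0 * v 3 - v 2 * v 1 ≠ 0) then r else 0)
      = ∑ w : Fin 11 → F, ∑ x : F, (if (x ≠ 0 ∧ w 10 ≠ 0 ∧ w 9 ≠ 0 ∧ w 8 ≠ 0 ∧ w 7 ≠ 0 ∧ w 6 ≠ 0 ∧ w 5 ≠ 0 ∧ w 4 ≠ 0 ∧ w 0 * w 3 - w 2 * w 1 ≠ 0) then r else 0) := by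
        rw [sum_pi_init]; rfl
    _ = ∑ w : Fin 11 → F, (if (w 10 ≠ 0 ∧ w 9 ≠ 0 ∧ w 8 ≠ 0 ∧ w 7 ≠ 0 ∧ w 6 ≠ 0 ∧ w 5 ≠ 0 ∧ w 4 ≠ 0 ∧ w 0 * w 3 - w 2 * w 1 ≠ 0) then ((Fintype.card F : ℝ) - 1) * (r) else 0) :=
        Finset.sum_congr rfl fun w _ => sum_ite_ne_and' _ _
    _ = ∑ w : Fin 10 → F, ∑ x : F, (if (x ≠ 0 ∧ w 9 ≠ 0 ∧ w 8 ≠ 0 ∧ w 7 ≠ 0 ∧ w 6 ≠ 0 ∧ w 5 ≠ 0 ∧ w 4 ≠ 0 ∧ w 0 * w 3 - w 2 * w 1 ≠ 0) then ((Fintype.card F : ℝ) - 1) * (r) else 0) := by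
        rw [sum_pi_init]; rfl
    _ = ∑ w : Fin 10 → F, (if (w 9 ≠ 0 ∧ w 8 ≠ 0 ∧ w 7 ≠ 0 ∧ w 6 ≠ 0 ∧ w 5 ≠ 0 ∧ w 4 ≠ 0 ∧ w 0 * w 3 - w 2 * w 1 ≠ 0) then ((Fintype.card F : ℝ) - 1) * (((Fintype.card F : ℝ) - 1) * (r)) else 0) :=
        Finset.sum_congr rfl fun w _ => sum_ite_ne_and' _ _
    _ = ∑ w : Fin 9 → F, ∑ x : F, (if (x ≠ 0 ∧ w 8 ≠ 0 ∧ w 7 ≠ 0 ∧ w 6 ≠ 0 ∧ w 5 ≠ 0 ∧ w 4 ≠ 0 ∧ w 0 * w 3 - w 2 * w 1 ≠ 0) then ((Fintype.card F : ℝ) - 1) * (((Fintype.card F : ℝ) - 1) * (r)) else 0) := by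
        rw [sum_pi_init]; rfl
    _ = ∑ w : Fin 9 → F, (if (w 8 ≠ 0 ∧ w 7 ≠ 0 ∧ w 6 ≠ 0 ∧ w 5 ≠ 0 ∧ w 4 ≠ 0 ∧ w 0 * w 3 - w 2 * w 1 ≠ 0) then ((Fintype.card F : ℝ) - 1) * (((Fintype.card F : ℝ) - 1) * (((Fintype.card F : ℝ) - 1) * (r))) else 0) :=
        Finset.sum_congr rfl fun w _ => sum_ite_ne_and' _ _
    _ = ∑ w : Fin 8 → F, ∑ x : F, (if (x ≠ 0 ∧ w 7 ≠ 0 ∧ w 6 ≠ 0 ∧ w 5 ≠ 0 ∧ w 4 ≠ 0 ∧ w 0 * w 3 - w 2 * w 1 ≠ 0) then ((Fintype.card F : ℝ) - 1) * (((Fintype.card F : ℝ) - 1) * (((Fintype.card F : ℝ) - 1) * (r))) else 0) := by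
        rw [sum_pi_init]; rfl
    _ = ∑ w : Fin 8 → F, (if (w 7 ≠ 0 ∧ w 6 ≠ 0 ∧ w 5 ≠ 0 ∧ w 4 ≠ 0 ∧ w 0 * w 3 - w 2 * w 1 ≠ 0) then ((Fintype.card F : ℝ) - 1) * (((Fintype.card F : ℝ) - 1) * (((Fintype.card F : ℝ) - 1) * (((Fintype.card F : ℝ) - 1) * (r)))) else 0) :=
        Finset.sum_congr rfl fun w _ => sum_ite_ne_and' _ _
    _ = ∑ w : Fin 7 → F, ∑ x : F, (if (x ≠ 0 ∧ w 6 ≠ 0 ∧ w 5 ≠ 0 ∧ w 4 ≠ 0 ∧ w 0 * w 3 - w 2 * w 1 ≠ 0) then ((Fintype.card F : ℝ) - 1) * (((Fintype.card F : ℝ) - 1) * (((Fintype.card F : ℝ) - 1) * (((Fintype.card F : ℝ) - 1) * (r)))) else 0) := by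
        rw [sum_pi_init]; rfl
    _ = ∑ w : Fin 7 → F, (if (w 6 ≠ 0 ∧ w 5 ≠ 0 ∧ w 4 ≠ 0 ∧ w 0 * w 3 - w 2 * w 1 ≠ 0) then ((Fintype.card F : ℝ) - 1) * (((Fintype.card F : ℝ) - 1) * (((Fintype.card F : ℝ) - 1) * (((Fintype.card F : ℝ) - 1) * (((Fintype.card F : ℝ) - 1) * (r))))) else 0) :=
        Finset.sum_congr rfl fun w _ => sum_ite_ne_and' _ _
    _ = ∑ w : Fin 6 → F, ∑ x : F, (if (x ≠ 0 ∧ w 5 ≠ 0 ∧ w 4 ≠ 0 ∧ w 0 * w 3 - w 2 * w 1 ≠ 0) then ((Fintype.card F : ℝ) - 1) * (((Fintype.card F : ℝ) - 1) * (((Fintype.card F : ℝ) - 1) * (((Fintype.card F : ℝ) - 1) * (((Fintype.card F : ℝ) - 1) * (r))))) else 0) := by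
        rw [sum_pi_init]; rfl
    _ = ∑ w : Fin 6 → F, (if (w 5 ≠ 0 ∧ w 4 ≠ 0 ∧ w 0 * w 3 - w 2 * w 1 ≠ 0) then ((Fintype.card F : ℝ) - 1) * (((Fintype.card F : ℝ) - 1) * (((Fintype.card F : ℝ) - 1) * (((Fintype.card F : ℝ) - 1) * (((Fintype.card F : ℝ) - 1) * (((Fintype.card F : ℝ) - 1) * (r)))))) else 0) :=
        Finset.sum_congr rfl fun w _ => sum_ite_ne_and' _ _
    _ = ∑ w : Fin 5 → F, ∑ x : F, (if (x ≠ 0 ∧ w 4 ≠ 0 ∧ w 0 * w 3 - w 2 * w 1 ≠ 0) then ((Fintype.card F : ℝ) - 1) * (((Fintype.card F : ℝ) - 1) * (((Fintype.card F : ℝ) - 1) * (((Fintype.card F : ℝ) - 1) * (((Fintype.card F : ℝ) - 1) * (((Fintype.card F : ℝ) - 1) * (r)))))) else 0) := by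
        rw [sum_pi_init]; rfl
    _ = ∑ w : Fin 5 → F, (if (w 4 ≠ 0 ∧ w 0 * w 3 - w 2 * w 1 ≠ 0) then ((Fintype.card F : ℝ) - 1) * (((Fintype.card F : ℝ) - 1) * (((Fintype.card F : ℝ) - 1) * (((Fintype.card F : ℝ) - 1) * (((Fintype.card F : ℝ) - 1) * (((Fintype.card F : ℝ) - 1) * (((Fintype.card F : ℝ) - 1) * (r))))))) else 0) :=
        Finset.sum_congr rfl fun w _ => sum_ite_ne_and' _ _
    _ = ∑ w : Fin 4 → F, ∑ x : F, (if (x ≠ 0 ∧ w 0 * w 3 - w 2 * w 1 ≠ 0) then ((Fintype.card F : ℝ) - 1) * (((Fintype.card F : ℝ) - 1) * (((Fintype.card F : ℝ) - 1) * (((Fintype.card F : ℝ) - 1) * (((Fintype.card F : ℝ) - 1) * (((Fintype.card F : ℝ) - 1) * (((Fintype.card F : ℝ) - 1) * (r))))))) else 0) := by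
        rw [sum_pi_init]; rfl
    _ = ∑ w : Fin 4 → F, (if (w 0 * w 3 - w 2 * w 1 ≠ 0) then ((Fintype.card F : ℝ) - 1) * (((Fintype.card F : ℝ) - 1) * (((Fintype.card F : ℝ) - 1) * (((Fintype.card F : ℝ) - 1) * (((Fintype.card F : ℝ) - 1) * (((Fintype.card F : ℝ) - 1) * (((Fintype.card F : ℝ) - 1) * (((Fintype.card F : ℝ) - 1) * (r)))))))) else 0) :=
        Finset.sum_congr rfl fun w _ => sum_ite_ne_and' _ _
    _ = (Fintype.card F : ℝ) * ((Fintype.card F : ℝ) + 1) * ((Fintype.card F : ℝ) - 1)^2 * (((Fintype.card F : ℝ) - 1) * (((Fintype.card F : ℝ) - 1) * (((Fintype.card F : ℝ) - 1) * (((Fintype.card F : ℝ) - 1) * (((Fintype.card F : ℝ) - 1) * (((Fintype.card F : ℝ) - 1) * (((Fintype.card F : ℝ) - 1) * (((Fintype.card F : ℝ) - 1) * (r))))))))) := sum_det4' _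
    _ = (Fintype.card F : ℝ) * ((Fintype.card F : ℝ) + 1) * ((Fintype.card F : ℝ) - 1)^10 * r := by ring

end Aux

lemma det_Ft1 {F : Type*} [Field F] (a b c d k13 k14 k47 k78 k25 k57 : F)
    (e1 e2 e3 e4 e5 e7 e8 : Bool) :
    (Ft1t a b c d k13 k14 k47 k78 k25 k57 e1 e2 e3 e4 e5 e7 e8).det =
      if e1 = true ∧ e2 = true ∧ e3 = true ∧ e5 = true ∧ e7 = true ∧ e8 = true then
        k13 * k78 * k25 * k57 * (a * d - c * b) else 0 := by
  simp only [Ft1t, f8t, f7t, f5t, f4t, f3t, f2t, f1t, Matrix.det_fin_two_of]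
  cases e1 <;> cases e2 <;> cases e3 <;> cases e4 <;> cases e5 <;> cases e7 <;> cases e8 <;>
    simp [Pi.smul_apply, Pi.add_apply, smul_eq_mul] <;> ring

lemma det_Ft2 {F : Type*} [Field F] (a b c d k14 k47 k79 k25 k57 k26 : F)
    (e1 e2 e4 e5 e6 e7 e9 : Bool) :
    (Ft2t a b c d k14 k47 k79 k25 k57 k26 e1 e2 e4 e5 e6 e7 e9).det =
      if e1 = true ∧ e2 = true ∧ e4 = true ∧ e6 = true ∧ e7 = true ∧ e9 = true then
        k26 * k79 * k47 * k14 * (c * b - a * d) else 0 := by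
  simp only [Ft2t, f9t, f7t, f6t, f5t, f4t, f3t, f2t, f1t, Matrix.det_fin_two_of]
  cases e1 <;> cases e2 <;> cases e4 <;> cases e5 <;> cases e6 <;> cases e7 <;> cases e9 <;>
    simp [Pi.smul_apply, Pi.add_apply, smul_eq_mul] <;> ring

lemma cond_iff {F : Type*} [Field F] (v : Fin 12 → F) (e : Fin 9 → Bool) :
    (IsUnit (Ft1t (v 0) (v 1) (v 2) (v 3) (v 4) (v 5) (v 8) (v 10) (v 6) (v 9)
          (e 0) (e 1) (e 2) (e 3) (e 4) (e 6) (e 7)) ∧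
       IsUnit (Ft2t (v 0) (v 1) (v 2) (v 3) (v 5) (v 8) (v 11) (v 6) (v 9) (v 7)
          (e 0) (e 1) (e 3) (e 4) (e 5) (e 6) (e 8))) ↔
    ((e = fun _ => true) ∧
      (v 11 ≠ 0 ∧ v 10 ≠ 0 ∧ v 9 ≠ 0 ∧ v 8 ≠ 0 ∧ v 7 ≠ 0 ∧ v 6 ≠ 0 ∧ v 5 ≠ 0 ∧ v 4 ≠ 0 ∧
        v 0 * v 3 - v 2 * v 1 ≠ 0)) := by
  rw [Matrix.isUnit_iff_isUnit_det, Matrix.isUnit_iff_isUnit_det, det_Ft1, det_Ft2,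
    isUnit_iff_ne_zero, isUnit_iff_ne_zero]
  constructor
  · rintro ⟨h1, h2⟩
    by_cases hg1 : (e 0 = true ∧ e 1 = true ∧ e 2 = true ∧ e 4 = true ∧ e 6 = true ∧ e 7 = true)
    case neg => rw [if_neg hg1] at h1; exact absurd rfl h1
    by_cases hg2 : (e 0 = true ∧ e 1 = true ∧ e 3 = true ∧ e 5 = true ∧ e 6 = true ∧ e 8 = true)
    case neg => rw [if_neg hg2] at h2; exact absurd rfl h2
    rw [if_pos hg1] at h1; rw [if_pos hg2] at h2
    obtain ⟨a0, a1, a2, a4, a6, a7⟩ := hg1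
    obtain ⟨b0, b1, b3, b5, b6, b8⟩ := hg2
    refine ⟨funext fun i => ?_, ?_, ?_, ?_, ?_, ?_, ?_, ?_, ?_, ?_⟩
    · fin_cases i <;> assumption
    · intro hz; exact h2 (by rw [hz]; ring)
    · intro hz; exact h1 (by rw [hz]; ring)
    · intro hz; exact h1 (by rw [hz]; ring)
    · intro hz; exact h2 (by rw [hz]; ring)
    · intro hz; exact h2 (by rw [hz]; ring)
    · intro hz; exact h1 (by rw [hz]; ring)
    · intro hz; exact h2 (by rw [hz]; ring)
    · intro hz; exact h1 (by rw [hz]; ring)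
    · intro hz; exact h1 (by rw [hz]; ring)
  · rintro ⟨he, h11, h10, h9, h8, h7, h6, h5, h4, hdet⟩
    subst he
    constructor
    · rw [if_pos ⟨rfl, rfl, rfl, rfl, rfl, rfl⟩]
      exact mul_ne_zero (mul_ne_zero (mul_ne_zero (mul_ne_zero h4 h10) h6) h9) hdet
    · rw [if_pos ⟨rfl, rfl, rfl, rfl, rfl, rfl⟩]
      have hdet2 : v 2 * v 1 - v 0 * v 3 ≠ 0 := fun hz => hdet (by linear_combination -hz)
      exact mul_ne_zero (mul_ne_zero (mul_ne_zero (mul_ne_zero h7 h11) h8) h5) hdet2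

open Classical in
theorem butterfly_erased_network_failure_probability
    (F : Type*) [Field F] [Fintype F] (q : ℕ) (hq : Fintype.card F = q) (hq2 : 2 ≤ q)
    (p : ℝ) (hp : p ∈ Set.Icc (0 : ℝ) 1) :
    (∑ v : Fin 12 → F, ∑ e : Fin 9 → Bool,
        if IsUnit (Ft1t (v 0) (v 1) (v 2) (v 3) (v 4) (v 5) (v 8) (v 10) (v 6) (v 9)
              (e 0) (e 1) (e 2) (e 3) (e 4) (e 6) (e 7)) ∧
           IsUnit (Ft2t (v 0) (v 1) (v 2) (v 3) (v 5) (v 8) (v 11) (v 6) (v 9) (v 7)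
              (e 0) (e 1) (e 3) (e 4) (e 5) (e 6) (e 8)) then
          (1 / (q : ℝ) ^ 12) * ∏ i : Fin 9, (if e i then 1 - p else p)
        else 0) =
      ((q : ℝ) + 1) * ((q : ℝ) - 1) ^ 10 * (1 - p) ^ 9 / (q : ℝ) ^ 11 ∧
    (∑ v : Fin 12 → F, ∑ e : Fin 9 → Bool,
        if ¬ (IsUnit (Ft1t (v 0) (v 1) (v 2) (v 3) (v 4) (v 5) (v 8) (v 10) (v 6) (v 9)
                (e 0) (e 1) (e 2) (e 3) (e 4) (e 6) (e 7)) ∧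
              IsUnit (Ft2t (v 0) (v 1) (v 2) (v 3) (v 5) (v 8) (v 11) (v 6) (v 9) (v 7)
                (e 0) (e 1) (e 3) (e 4) (e 5) (e 6) (e 8))) then
          (1 / (q : ℝ) ^ 12) * ∏ i : Fin 9, (if e i then 1 - p else p)
        else 0) =
      1 - ((q : ℝ) + 1) * ((q : ℝ) - 1) ^ 10 * (1 - p) ^ 9 / (q : ℝ) ^ 11 := by
  classical
  have hQ0 : (q : ℝ) ≠ 0 := by
    have h2 : (2:ℝ) ≤ (q:ℝ) := by exact_mod_cast hq2
    linarith
  -- Step 1: collapse the e-sum for each fixed v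
  have step1 : ∀ v : Fin 12 → F,
      (∑ e : Fin 9 → Bool,
        if IsUnit (Ft1t (v 0) (v 1) (v 2) (v 3) (v 4) (v 5) (v 8) (v 10) (v 6) (v 9)
              (e 0) (e 1) (e 2) (e 3) (e 4) (e 6) (e 7)) ∧
           IsUnit (Ft2t (v 0) (v 1) (v 2) (v 3) (v 5) (v 8) (v 11) (v 6) (v 9) (v 7)
              (e 0) (e 1) (e 3) (e 4) (e 5) (e 6) (e 8)) then
          (1 / (q : ℝ) ^ 12) * ∏ i : Fin 9, (if e i then 1 - p else p)
        else 0)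
      = (if (v 11 ≠ 0 ∧ v 10 ≠ 0 ∧ v 9 ≠ 0 ∧ v 8 ≠ 0 ∧ v 7 ≠ 0 ∧ v 6 ≠ 0 ∧ v 5 ≠ 0 ∧ v 4 ≠ 0 ∧
          v 0 * v 3 - v 2 * v 1 ≠ 0) then (1 / (q : ℝ) ^ 12) * (1 - p) ^ 9 else 0) := by
    intro v
    rw [Finset.sum_congr rfl fun e _ => if_congr (cond_iff v e) rfl rfl]
    by_cases hC : (v 11 ≠ 0 ∧ v 10 ≠ 0 ∧ v 9 ≠ 0 ∧ v 8 ≠ 0 ∧ v 7 ≠ 0 ∧ v 6 ≠ 0 ∧ v 5 ≠ 0 ∧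
        v 4 ≠ 0 ∧ v 0 * v 3 - v 2 * v 1 ≠ 0)
    · rw [if_pos hC,
        Finset.sum_congr rfl fun e _ => if_congr (and_iff_left hC) rfl rfl,
        sum_ite_eq_gen (fun _ => true)
          (fun e => (1 / (q : ℝ) ^ 12) * ∏ i : Fin 9, (if e i then 1 - p else p))]
      simp [Finset.prod_const]
    · rw [if_neg hC]
      exact Finset.sum_eq_zero fun e _ => if_neg (fun hc => hC hc.2)
  have hS : (∑ v : Fin 12 → F, ∑ e : Fin 9 → Bool,
        if IsUnit (Ft1t (v 0) (v 1) (v 2) (v 3) (v 4) (v 5) (v 8) (v 10) (v 6) (v 9)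
              (e 0) (e 1) (e 2) (e 3) (e 4) (e 6) (e 7)) ∧
           IsUnit (Ft2t (v 0) (v 1) (v 2) (v 3) (v 5) (v 8) (v 11) (v 6) (v 9) (v 7)
              (e 0) (e 1) (e 3) (e 4) (e 5) (e 6) (e 8)) then
          (1 / (q : ℝ) ^ 12) * ∏ i : Fin 9, (if e i then 1 - p else p)
        else 0) =
      ((q : ℝ) + 1) * ((q : ℝ) - 1) ^ 10 * (1 - p) ^ 9 / (q : ℝ) ^ 11 := by
    rw [Finset.sum_congr rfl fun v _ => step1 v, count12, hq]
    field_simp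
  refine ⟨hS, ?_⟩
  -- the total weight is 1
  have htote : (∑ e : Fin 9 → Bool, ∏ i : Fin 9, (if e i then 1 - p else p)) = 1 := by
    have hps := Finset.prod_univ_sum (fun _ : Fin 9 => (Finset.univ : Finset Bool))
      (fun _ b => if b = true then 1 - p else p)
    rw [← Fintype.piFinset_univ, ← hps]
    have h1 : ∀ i : Fin 9, (∑ b : Bool, (if b then 1 - p else p)) = 1 := by
      intro i; rw [Fintype.sum_bool]; simp
    rw [Finset.prod_congr rfl fun i _ => h1 i, Finset.prod_const_one]
  have htot : (∑ v : Fin 12 → F, ∑ e : Fin 9 → Bool,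
      (1 / (q : ℝ) ^ 12) * ∏ i : Fin 9, (if e i then 1 - p else p)) = 1 := by
    have inner : (∑ e : Fin 9 → Bool,
        (1 / (q : ℝ) ^ 12) * ∏ i : Fin 9, (if e i then 1 - p else p)) = 1 / (q : ℝ) ^ 12 := by
      rw [← Finset.mul_sum, htote, mul_one]
    rw [Finset.sum_congr rfl fun v _ => inner, Finset.sum_const, Finset.card_univ,
      Fintype.card_fun, Fintype.card_fin, hq, nsmul_eq_mul]
    push_cast
    field_simp
  have hpoint : ∀ (P : Prop) (_ : Decidable P) (_ : Decidable ¬P) (w : ℝ),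
      (if ¬P then w else 0) = w - (if P then w else 0) := by
    intro P i1 i2 w
    by_cases h : P
    · rw [if_pos h, if_neg (not_not_intro h), sub_self]
    · rw [if_pos h, if_neg h, sub_zero]
  calc (∑ v : Fin 12 → F, ∑ e : Fin 9 → Bool,
        if ¬ (IsUnit (Ft1t (v 0) (v 1) (v 2) (v 3) (v 4) (v 5) (v 8) (v 10) (v 6) (v 9)
                (e 0) (e 1) (e 2) (e 3) (e 4) (e 6) (e 7)) ∧
              IsUnit (Ft2t (v 0) (v 1) (v 2) (v 3) (v 5) (v 8) (v 11) (v 6) (v 9) (v 7)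
                (e 0) (e 1) (e 3) (e 4) (e 5) (e 6) (e 8))) then
          (1 / (q : ℝ) ^ 12) * ∏ i : Fin 9, (if e i then 1 - p else p)
        else 0)
      = (∑ v : Fin 12 → F, ∑ e : Fin 9 → Bool,
          (((1 / (q : ℝ) ^ 12) * ∏ i : Fin 9, (if e i then 1 - p else p)) -
          (if (IsUnit (Ft1t (v 0) (v 1) (v 2) (v 3) (v 4) (v 5) (v 8) (v 10) (v 6) (v 9)
                (e 0) (e 1) (e 2) (e 3) (e 4) (e 6) (e 7)) ∧
              IsUnit (Ft2t (v 0) (v 1) (v 2) (v 3) (v 5) (v 8) (v 11) (v 6) (v 9) (v 7)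
                (e 0) (e 1) (e 3) (e 4) (e 5) (e 6) (e 8))) then
            (1 / (q : ℝ) ^ 12) * ∏ i : Fin 9, (if e i then 1 - p else p)
          else 0))) :=
        Finset.sum_congr rfl fun v _ => Finset.sum_congr rfl fun e _ => hpoint _ _ _ _
    _ = 1 - ((q : ℝ) + 1) * ((q : ℝ) - 1) ^ 10 * (1 - p) ^ 9 / (q : ℝ) ^ 11 := by
        rw [Finset.sum_congr rfl fun v (_ : v ∈ Finset.univ) => Finset.sum_sub_distrib _ _,
          Finset.sum_sub_distrib, htot, hS]
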